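/- Let g be a Lie superalgebra over k and σ a finite-order automorphism. For any two periods m and m' of σ (i.e., σ^m = σ^{m'} = id), the loop superalgebras L_m(g,σ) and L_{m'}(g,σ) are isomorphic as k-Lie superalgebras, where L_m(g,σ) = ⊕_{i∈ℤ} g_{ī mod m} ⊗ z^i ⊆ g ⊗ k[z,z⁻¹] and g_ī = {x ∈ g : σ(x) = ζ_m^i x} with respect to a fixed compatible system of primitive roots of unity ζ_m (so that ζ_{lm}^l = ζ_m). -/

import Mathlib

section

variable {k V : Type*} [Field k] [AddCommGroup V] [Module k V]

/-- The bracket of the loop superalgebra `g ⊗ k[z,z⁻¹]`, modelled on finitely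
supported functions `ℤ →₀ g`: `[x⊗z^i, y⊗z^j] = [x,y]⊗z^{i+j}` (convolution). -/
noncomputable def loopBracket (mul : V →ₗ[k] V →ₗ[k] V) (f g : ℤ →₀ V) : ℤ →₀ V :=
  f.sum fun i x => g.sum fun j y => Finsupp.single (i + j) (mul x y)

/-- The loop algebra `L_m(g,σ) = ⊕_i g_ī ⊗ z^i`: the set of `f : ℤ →₀ g` with
`f i` in the `ζ^i`-eigenspace of `σ`. -/
noncomputable def loopSub (σ : V ≃ₗ[k] V) (ζ : k) : Submodule k (ℤ →₀ V) where
  carrier := {f | ∀ i : ℤ, σ (f i) = ζ ^ i • f i}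
  add_mem' := by
    intro f g hf hg i
    simp only [Finsupp.add_apply, map_add, hf i, hg i, smul_add]
  zero_mem' := by
    intro i
    simp
  smul_mem' := by
    intro c f hf i
    rw [Finsupp.smul_apply, map_smul, hf i, smul_comm]

end

section

variable {k V : Type*} [Field k] [AddCommGroup V] [Module k V]

variable (mul : V →ₗ[k] V →ₗ[k] V) (σ : V ≃ₗ[k] V)

lemma aux_bracket_apply (f g : ℤ →₀ V) (n : ℤ) :
    loopBracket mul f g n = f.sum fun i x => g.sum fun j y =>
      (Finsupp.single (i + j) (mul x y) : ℤ →₀ V) n := by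
  simp only [loopBracket, Finsupp.sum_apply]

lemma aux_bracket_mem (hσbr : ∀ x y, σ (mul x y) = mul (σ x) (σ y))
    {ζ : k} (hζ0 : ζ ≠ 0) {f g : ℤ →₀ V}
    (hf : f ∈ loopSub σ ζ) (hg : g ∈ loopSub σ ζ) :
    loopBracket mul f g ∈ loopSub σ ζ := by
  intro n
  rw [aux_bracket_apply]
  rw [map_finsuppSum σ]
  rw [Finsupp.smul_sum]
  refine Finsupp.sum_congr fun i _ => ?_
  rw [map_finsuppSum σ, Finsupp.smul_sum]
  refine Finsupp.sum_congr fun j _ => ?_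
  rcases eq_or_ne (i + j) n with h | h
  · subst h
    rw [Finsupp.single_eq_same]
    rw [hσbr, hf i, hg j]
    simp only [map_smul, LinearMap.smul_apply, smul_smul]
    rw [← zpow_add₀ hζ0, add_comm j i]
  · rw [Finsupp.single_eq_of_ne h.symm]
    rw [map_zero, smul_zero]

variable (l : ℕ)

lemma aux_inj (hl : 0 < l) : Function.Injective (fun i : ℤ => (l : ℤ) * i) :=
  fun a b h => by
    have : (l : ℤ) ≠ 0 := by exact_mod_cast hl.ne'
    exact mul_left_cancel₀ this h

lemma aux_T_bracket (hl : 0 < l) (f g : ℤ →₀ V) :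
    Finsupp.mapDomain (fun i : ℤ => (l : ℤ) * i) (loopBracket mul f g) =
      loopBracket mul (Finsupp.mapDomain (fun i : ℤ => (l : ℤ) * i) f)
        (Finsupp.mapDomain (fun i : ℤ => (l : ℤ) * i) g) := by
  unfold loopBracket
  rw [Finsupp.sum_mapDomain_index_inj (aux_inj l hl)]
  rw [Finsupp.mapDomain_sum]
  refine Finsupp.sum_congr fun i _ => ?_
  rw [Finsupp.sum_mapDomain_index_inj (aux_inj l hl), Finsupp.mapDomain_sum]
  refine Finsupp.sum_congr fun j _ => ?_
  rw [Finsupp.mapDomain_single, mul_add]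

lemma aux_mem_forward {ζ ζ' : k} (hl : 0 < l) (hpow : ζ' ^ l = ζ)
    {f : ℤ →₀ V} (hf : f ∈ loopSub σ ζ) :
    Finsupp.mapDomain (fun i : ℤ => (l : ℤ) * i) f ∈ loopSub σ ζ' := by
  intro j
  by_cases hj : j ∈ Set.range fun i : ℤ => (l : ℤ) * i
  · obtain ⟨i, rfl⟩ := hj
    rw [Finsupp.mapDomain_apply (aux_inj l hl), hf i]
    congr 1
    rw [zpow_mul, zpow_natCast, hpow]
  · rw [Finsupp.mapDomain_notin_range _ _ hj, map_zero, smul_zero]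

lemma aux_iterate {ζ' : k} {g : ℤ →₀ V} (hg : g ∈ loopSub σ ζ') (j : ℤ) (n : ℕ) :
    (⇑σ)^[n] (g j) = (ζ' ^ j) ^ n • g j := by
  induction n with
  | zero => simp
  | succ n ih =>
    rw [Function.iterate_succ_apply', ih, map_smul, hg j, smul_smul, pow_succ]

lemma aux_vanish {ζ' : k} {m : ℕ} (hm : 0 < m)
    (hprim : IsPrimitiveRoot ζ' (l * m)) (hσm : ∀ x, (⇑σ)^[m] x = x)
    {g : ℤ →₀ V} (hg : g ∈ loopSub σ ζ') {j : ℤ} (hj : ¬ (l : ℤ) ∣ j) :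
    g j = 0 := by
  have h1 : (ζ' ^ j) ^ m • g j = g j := by rw [← aux_iterate σ hg j m, hσm]
  by_contra hne
  apply hj
  have h2 : (ζ' ^ j) ^ m = 1 := by
    by_contra h2
    exact hne (by
      have := sub_eq_zero.mpr h1.symm  -- not quite; do directly
      have h3 : ((ζ' ^ j) ^ m - 1) • g j = 0 := by
        rw [sub_smul, one_smul, h1, sub_self]
      rcases smul_eq_zero.mp h3 with h | h
      · exact absurd (sub_eq_zero.mp h) h2
      · exact h)
  have h4 : ζ' ^ ((j : ℤ) * m) = 1 := by
    rw [zpow_mul, zpow_natCast] at *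
    exact h2
  have h5 := (hprim.zpow_eq_one_iff_dvd _).mp h4
  push_cast at h5
  rcases h5 with ⟨c, hc⟩
  have hmz : (m : ℤ) ≠ 0 := by exact_mod_cast hm.ne'
  refine ⟨c, ?_⟩
  have : j * m = (l : ℤ) * c * m := by rw [hc]; ring
  exact mul_right_cancel₀ hmz this

lemma aux_surj {ζ ζ' : k} {m : ℕ} (hl : 0 < l) (hm : 0 < m)
    (hprim : IsPrimitiveRoot ζ' (l * m)) (hpow : ζ' ^ l = ζ)
    (hσm : ∀ x, (⇑σ)^[m] x = x)
    {g : ℤ →₀ V} (hg : g ∈ loopSub σ ζ') :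
    ∃ f ∈ loopSub σ ζ, Finsupp.mapDomain (fun i : ℤ => (l : ℤ) * i) f = g := by
  have hsupp : (g.support : Set ℤ) ⊆ Set.range fun i : ℤ => (l : ℤ) * i := by
    intro j hj
    simp only [Finset.mem_coe, Finsupp.mem_support_iff] at hj
    by_contra hr
    apply hj
    refine aux_vanish σ l hm hprim hσm hg ?_
    intro ⟨c, hc⟩
    exact hr ⟨c, hc.symm⟩
  set f := Finsupp.comapDomain _ g ((aux_inj l hl).injOn) with hfdef
  have hmap : Finsupp.mapDomain (fun i : ℤ => (l : ℤ) * i) f = g :=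
    Finsupp.mapDomain_comapDomain _ (aux_inj l hl) g hsupp
  refine ⟨f, ?_, hmap⟩
  intro i
  have hfi : f i = g ((l : ℤ) * i) := rfl
  rw [hfi, hg ((l : ℤ) * i)]
  congr 1
  rw [zpow_mul, zpow_natCast, hpow]

lemma aux_values (hl : 0 < l) (p : Submodule k V) (f : ℤ →₀ V) :
    (∀ i, f i ∈ p) ↔ (∀ j, Finsupp.mapDomain (fun i : ℤ => (l : ℤ) * i) f j ∈ p) := by
  constructor
  · intro h j
    by_cases hj : j ∈ Set.range fun i : ℤ => (l : ℤ) * i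
    · obtain ⟨i, rfl⟩ := hj
      rw [Finsupp.mapDomain_apply (aux_inj l hl)]
      exact h i
    · rw [Finsupp.mapDomain_notin_range _ _ hj]
      exact p.zero_mem
  · intro h i
    have := h ((l : ℤ) * i)
    rwa [Finsupp.mapDomain_apply (aux_inj l hl)] at this

noncomputable def stepEquiv {m : ℕ} {ζ ζ' : k} (hl : 0 < l) (hm : 0 < m)
    (hprim : IsPrimitiveRoot ζ' (l * m)) (hpow : ζ' ^ l = ζ)
    (hσm : ∀ x, (⇑σ)^[m] x = x) :
    ↥(loopSub σ ζ) ≃ₗ[k] ↥(loopSub σ ζ') :=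
  LinearEquiv.ofBijective
    ((Finsupp.lmapDomain V k (fun i : ℤ => (l : ℤ) * i)).restrict
      (fun f hf => aux_mem_forward σ l hl hpow hf))
    ⟨fun a b h => Subtype.ext
        (Finsupp.mapDomain_injective (aux_inj l hl) (congrArg Subtype.val h)),
      fun y => by
        obtain ⟨f, hf, hmap⟩ := aux_surj σ l hl hm hprim hpow hσm y.2
        exact ⟨⟨f, hf⟩, Subtype.ext hmap⟩⟩

lemma stepEquiv_coe {m : ℕ} {ζ ζ' : k} (hl : 0 < l) (hm : 0 < m)
    (hprim : IsPrimitiveRoot ζ' (l * m)) (hpow : ζ' ^ l = ζ)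
    (hσm : ∀ x, (⇑σ)^[m] x = x) (x : ↥(loopSub σ ζ)) :
    ((stepEquiv σ l hl hm hprim hpow hσm x : ↥(loopSub σ ζ')) : ℤ →₀ V) =
      Finsupp.mapDomain (fun i : ℤ => (l : ℤ) * i) (x : ℤ →₀ V) :=
  rfl

end


/-- Independence of the loop superalgebra from the choice of the period: if
`σ^m = σ^{m'} = id`, then `L_m(g,σ) ≅ L_{m'}(g,σ)` as `k`-Lie superalgebras
(with respect to a fixed compatible system of primitive roots of unity). -/
theorem stmt_10 (k V : Type*) [Field k] [IsAlgClosed k] [CharZero k]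
    [AddCommGroup V] [Module k V] [FiniteDimensional k V]
    (g0 g1 : Submodule k V) (hcompl : IsCompl g0 g1)
    (mul : V →ₗ[k] V →ₗ[k] V)
    (σ : V ≃ₗ[k] V) (hσbr : ∀ x y, σ (mul x y) = mul (σ x) (σ y))
    (hσ0 : ∀ x ∈ g0, σ x ∈ g0) (hσ1 : ∀ x ∈ g1, σ x ∈ g1)
    (ζ : ℕ → k) (hζ : ∀ l : ℕ, 0 < l → IsPrimitiveRoot (ζ l) l)
    (hcompat : ∀ l l' : ℕ, 0 < l → 0 < l' → (ζ (l * l')) ^ l = ζ l')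
    (m m' : ℕ) (hm : 0 < m) (hm' : 0 < m')
    (hσm : ∀ x, (⇑σ)^[m] x = x) (hσm' : ∀ x, (⇑σ)^[m'] x = x) :
    (∀ x y : ↥(loopSub σ (ζ m)),
      loopBracket mul (x : ℤ →₀ V) (y : ℤ →₀ V) ∈ loopSub σ (ζ m)) ∧
    (∀ x y : ↥(loopSub σ (ζ m')),
      loopBracket mul (x : ℤ →₀ V) (y : ℤ →₀ V) ∈ loopSub σ (ζ m')) ∧
    ∃ e : ↥(loopSub σ (ζ m)) ≃ₗ[k] ↥(loopSub σ (ζ m')),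
      (∀ x y z : ↥(loopSub σ (ζ m)),
        (z : ℤ →₀ V) = loopBracket mul (x : ℤ →₀ V) (y : ℤ →₀ V) →
        (e z : ℤ →₀ V) = loopBracket mul (e x : ℤ →₀ V) (e y : ℤ →₀ V)) ∧
      (∀ x : ↥(loopSub σ (ζ m)),
        (∀ i, (x : ℤ →₀ V) i ∈ g0) ↔ (∀ i, (e x : ℤ →₀ V) i ∈ g0)) ∧
      (∀ x : ↥(loopSub σ (ζ m)),
        (∀ i, (x : ℤ →₀ V) i ∈ g1) ↔ (∀ i, (e x : ℤ →₀ V) i ∈ g1)) := by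
  have hz0 : ζ m ≠ 0 := (hζ m hm).ne_zero hm.ne'
  have hz0' : ζ m' ≠ 0 := (hζ m' hm').ne_zero hm'.ne'
  refine ⟨fun x y => aux_bracket_mem mul σ hσbr hz0 x.2 y.2,
    fun x y => aux_bracket_mem mul σ hσbr hz0' x.2 y.2, ?_⟩
  have hprim1 : IsPrimitiveRoot (ζ (m * m')) (m' * m) := by
    rw [Nat.mul_comm]; exact hζ _ (Nat.mul_pos hm' hm)
  have hpow1 : (ζ (m * m')) ^ m' = ζ m := by
    have h := hcompat m' m hm' hm
    rwa [Nat.mul_comm m' m] at h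
  have hprim2 : IsPrimitiveRoot (ζ (m * m')) (m * m') := hζ _ (Nat.mul_pos hm hm')
  have hpow2 : (ζ (m * m')) ^ m = ζ m' := hcompat m m' hm hm'
  set E1 := stepEquiv σ m' hm' hm hprim1 hpow1 hσm with hE1
  set E2 := stepEquiv σ m hm hm' hprim2 hpow2 hσm' with hE2
  set e := E1.trans E2.symm with he
  have key : ∀ w : ↥(loopSub σ (ζ m)),
      Finsupp.mapDomain (fun i : ℤ => (m : ℤ) * i) ((e w : ↥(loopSub σ (ζ m'))) : ℤ →₀ V) =
        Finsupp.mapDomain (fun i : ℤ => (m' : ℤ) * i) ((w : ℤ →₀ V)) := by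
    intro w
    have h1 : E2 (e w) = E1 w := by
      rw [he, LinearEquiv.trans_apply, E2.apply_symm_apply]
    have h2 : ((E2 (e w) : ↥(loopSub σ (ζ (m * m')))) : ℤ →₀ V) = ((E1 w : ↥(loopSub σ (ζ (m * m')))) : ℤ →₀ V) :=
      congrArg _ h1
    rw [hE2, stepEquiv_coe] at h2
    rw [hE1, stepEquiv_coe] at h2
    exact h2
  refine ⟨e, ?_, ?_, ?_⟩
  · intro x y z hz
    apply Finsupp.mapDomain_injective (aux_inj m hm)
    rw [key z, hz, aux_T_bracket mul m' hm', ← key x, ← key y, ← aux_T_bracket mul m hm]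
  · intro x
    rw [aux_values m' hm' g0, ← key x, ← aux_values m hm g0]
  · intro x
    rw [aux_values m' hm' g1, ← key x, ← aux_values m hm g1]
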